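/- For any Borel probability measures σ, μ supported on [0,∞), one has σ ⊠∨ μ = 𝔸^∨_σ(μ) ∪∨ 𝔸^∨_μ(σ), i.e., the free max-convolution equals the Boolean max-convolution of the two subordination measures. -/

import Mathlib

open MeasureTheory ProbabilityTheory Filter Topology

/-- The subordination distribution function for free max-convolution:
`max {1 - (1 - Fμ)/Fσ, 0}`, set to `0` where `Fσ = 0`. -/
noncomputable def subFn (Fμ Fσ : ℝ → ℝ) (x : ℝ) : ℝ :=
  if Fσ x = 0 then 0 else max (1 - (1 - Fμ x) / Fσ x) 0

/-- The Boolean max-convolution distribution function: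
`F G / (F + G - F G)`, set to `0` whenever `F = 0` or `G = 0`. -/
noncomputable def boolFn (F G : ℝ → ℝ) (x : ℝ) : ℝ :=
  if F x = 0 ∨ G x = 0 then 0 else F x * G x / (F x + G x - F x * G x)

lemma key_real (F G : ℝ) (hF0 : 0 ≤ F) (hG0 : 0 ≤ G) (hF1 : F ≤ 1) (hG1 : G ≤ 1) :
    max (F + G - 1) 0 =
      (let a := if F = 0 then (0:ℝ) else max (1 - (1 - G) / F) 0
       let b := if G = 0 then (0:ℝ) else max (1 - (1 - F) / G) 0
       if a = 0 ∨ b = 0 then 0 else a * b / (a + b - a * b)) := by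
  by_cases hF : F = 0
  · simp [hF]
    nlinarith
  by_cases hG : G = 0
  · simp [hG]
    nlinarith
  have hF' : 0 < F := lt_of_le_of_ne hF0 (Ne.symm hF)
  have hG' : 0 < G := lt_of_le_of_ne hG0 (Ne.symm hG)
  simp only [hF, hG, if_false]
  by_cases hs : F + G - 1 ≤ 0
  · have ha : max (1 - (1 - G) / F) 0 = 0 := by
      rw [max_eq_right]
      rw [sub_nonpos, le_div_iff₀ hF']
      nlinarith
    simp [ha, max_eq_right hs]
  · push_neg at hs
    have ha : max (1 - (1 - G) / F) 0 = (F + G - 1) / F := by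
      rw [max_eq_left]
      · field_simp; ring
      · rw [sub_nonneg, div_le_one hF']; nlinarith
    have hb : max (1 - (1 - F) / G) 0 = (F + G - 1) / G := by
      rw [max_eq_left]
      · field_simp; ring
      · rw [sub_nonneg, div_le_one hG']; nlinarith
    rw [ha, hb, max_eq_left hs.le]
    have hane : (F + G - 1) / F ≠ 0 := ne_of_gt (by positivity)
    have hbne : (F + G - 1) / G ≠ 0 := ne_of_gt (by positivity)
    rw [if_neg (by push_neg; exact ⟨hane, hbne⟩)]
    have hden : (F + G - 1) / F + (F + G - 1) / G - (F + G - 1) / F * ((F + G - 1) / G)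
        = (F + G - 1) / (F * G) := by
      field_simp
      ring
    rw [hden]
    have hsne : F + G - 1 ≠ 0 := ne_of_gt hs
    field_simp

theorem freeMax_eq_boolMax_of_subordinations (σ μ : Measure ℝ)
    [IsProbabilityMeasure σ] [IsProbabilityMeasure μ]
    -- σ and μ are supported on [0,∞)
    (hσ : σ (Set.Iio 0) = 0) (hμ : μ (Set.Iio 0) = 0)
    (A B L R : Measure ℝ)
    [IsProbabilityMeasure A] [IsProbabilityMeasure B]
    [IsProbabilityMeasure L] [IsProbabilityMeasure R]
    -- A = 𝔸^∨_σ(μ), B = 𝔸^∨_μ(σ)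
    (hA : ∀ x, cdf A x = subFn (cdf μ) (cdf σ) x)
    (hB : ∀ x, cdf B x = subFn (cdf σ) (cdf μ) x)
    -- L = σ ⊠∨ μ
    (hL : ∀ x, cdf L x = max (cdf σ x + cdf μ x - 1) 0)
    -- R = 𝔸^∨_σ(μ) ∪∨ 𝔸^∨_μ(σ)
    (hR : ∀ x, cdf R x = boolFn (cdf A) (cdf B) x) :
    L = R := by
  have hcdf : ∀ x, cdf L x = cdf R x := by
    intro x
    rw [hL x, hR x]
    unfold boolFn
    rw [hA x, hB x]
    unfold subFn
    exact key_real (cdf σ x) (cdf μ x) (cdf_nonneg σ x) (cdf_nonneg μ x) (cdf_le_one σ x) (cdf_le_one μ x)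
  refine Measure.ext_of_Iic L R (fun x ↦ ?_)
  have h := hcdf x
  rw [cdf_eq_real, cdf_eq_real, measureReal_def, measureReal_def] at h
  exact (ENNReal.toReal_eq_toReal_iff' (measure_ne_top L _) (measure_ne_top R _)).mp h
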